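/- For a simple random walk on a connected graph G, the expected hitting time satisfies H(a,z) = (1/2) Σ_x d(x) [R(a↔z) + R(z↔x) - R(a↔x)], where R denotes effective resistance with unit resistances on edges. -/

import Mathlib

/-- `v` is the unit-current voltage for the pair `(a,z)` in the electric network obtained by
placing a unit resistor on every edge of `G`: `v(z) = 0`, a unit current flows out of `a`,
and the net current is zero at every other vertex. -/
def IsUnitCurrentVoltage {V : Type*} [Fintype V] [DecidableEq V]
    (G : SimpleGraph V) [DecidableRel G.Adj] (a z : V) (v : V → ℝ) : Prop :=
  v z = 0 ∧ (∑ y ∈ G.neighborFinset a, (v a - v y)) = 1 ∧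
    ∀ x : V, x ≠ a → x ≠ z → (∑ y ∈ G.neighborFinset x, (v x - v y)) = 0

/-- `R` is the effective-resistance function of `G` with unit resistances on edges. -/
def IsEffectiveResistance {V : Type*} [Fintype V] [DecidableEq V]
    (G : SimpleGraph V) [DecidableRel G.Adj] (R : V → V → ℝ) : Prop :=
  (∀ x, R x x = 0) ∧
    ∀ a z : V, a ≠ z → ∃ v : V → ℝ, IsUnitCurrentVoltage G a z v ∧ R a z = v a

namespace Stmt7Aux
set_option linter.unusedSectionVars false

variable {V : Type*} [Fintype V] [DecidableEq V]

def lap (G : SimpleGraph V) [DecidableRel G.Adj] (f : V → ℝ) (x : V) : ℝ :=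
  ∑ y ∈ G.neighborFinset x, (f x - f y)

variable (G : SimpleGraph V) [DecidableRel G.Adj]

lemma nbr_sum_comm (h : V → V → ℝ) :
    ∑ x, ∑ y ∈ G.neighborFinset x, h x y = ∑ x, ∑ y ∈ G.neighborFinset x, h y x := by
  have key : ∀ k : V → V → ℝ, ∑ x, ∑ y ∈ G.neighborFinset x, k x y
      = ∑ x : V, ∑ y : V, if G.Adj x y then k x y else 0 := by
    intro k
    refine Finset.sum_congr rfl fun x _ => ?_
    rw [SimpleGraph.neighborFinset_eq_filter, Finset.sum_filter]
  rw [key, key, Finset.sum_comm]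
  refine Finset.sum_congr rfl fun x _ => Finset.sum_congr rfl fun y _ => ?_
  by_cases hxy : G.Adj y x
  · rw [if_pos hxy, if_pos hxy.symm]
  · rw [if_neg hxy, if_neg (fun h => hxy h.symm)]

lemma sum_mul_lap (f g : V → ℝ) :
    ∑ x, f x * lap G g x = ∑ x, g x * lap G f x := by
  have e : ∀ u w : V → ℝ, ∑ x, u x * lap G w x
      = ∑ x, ∑ y ∈ G.neighborFinset x, u x * (w x - w y) := by
    intro u w
    exact Finset.sum_congr rfl fun x _ => Finset.mul_sum _ _ _
  rw [e, e, nbr_sum_comm G (fun x y => f x * (g x - g y))]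
  simp only [mul_sub, Finset.sum_sub_distrib]
  rw [← nbr_sum_comm G (fun x y => f x * g x)]
  congr 1 <;>
    exact Finset.sum_congr rfl fun x _ => Finset.sum_congr rfl fun y _ => mul_comm _ _

lemma lap_const_sub (c : ℝ) (f g : V → ℝ) (x : V) :
    lap G (fun t => f t - g t - c) x = lap G f x - lap G g x := by
  unfold lap
  rw [← Finset.sum_sub_distrib]
  exact Finset.sum_congr rfl fun y _ => by ring

lemma lap_sub (f g : V → ℝ) (x : V) :
    lap G (fun t => f t - g t) x = lap G f x - lap G g x := by
  unfold lap
  rw [← Finset.sum_sub_distrib]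
  exact Finset.sum_congr rfl fun y _ => by ring

lemma lap_energy (u : V → ℝ) :
    2 * ∑ x, u x * lap G u x = ∑ x, ∑ y ∈ G.neighborFinset x, (u x - u y)^2 := by
  have e : ∑ x, u x * lap G u x
      = ∑ x, ∑ y ∈ G.neighborFinset x, u x * (u x - u y) :=
    Finset.sum_congr rfl fun x _ => Finset.mul_sum _ _ _
  have e2 : ∑ x, u x * lap G u x
      = ∑ x, ∑ y ∈ G.neighborFinset x, u y * (u y - u x) := by
    rw [e, nbr_sum_comm G (fun x y => u x * (u x - u y))]
  rw [two_mul]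
  nth_rewrite 1 [e]
  rw [e2, ← Finset.sum_add_distrib]
  refine Finset.sum_congr rfl fun x _ => ?_
  rw [← Finset.sum_add_distrib]
  exact Finset.sum_congr rfl fun y _ => by ring

lemma harmonic_zero (hconn : G.Connected) (z : V) (u : V → ℝ)
    (hz : u z = 0) (hh : ∀ x, x ≠ z → lap G u x = 0) : ∀ x, u x = 0 := by
  have h1 : ∑ x, u x * lap G u x = 0 := by
    refine Finset.sum_eq_zero fun x _ => ?_
    by_cases hx : x = z
    · subst hx; rw [hz]; ring
    · rw [hh x hx]; ring
  have h2 : ∑ x, ∑ y ∈ G.neighborFinset x, (u x - u y)^2 = 0 := by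
    rw [← lap_energy, h1, mul_zero]
  have hadj : ∀ x y, G.Adj x y → u x = u y := by
    intro x y hxy
    have hx := (Finset.sum_eq_zero_iff_of_nonneg
      (fun x _ => Finset.sum_nonneg fun y _ => sq_nonneg _)).mp h2 x (Finset.mem_univ x)
    have hy := (Finset.sum_eq_zero_iff_of_nonneg (fun y _ => sq_nonneg _)).mp hx y
      ((SimpleGraph.mem_neighborFinset G x y).mpr hxy)
    have := sq_eq_zero_iff.mp hy
    linarith [sub_eq_zero.mp this]
  intro x
  obtain ⟨p⟩ := hconn.preconnected x z
  rw [← hz]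
  clear hz hh h1 h2
  induction p with
  | nil => rfl
  | cons h p ih => exact (hadj _ _ h).trans ih

lemma sum_lap_zero (f : V → ℝ) : ∑ x, lap G f x = 0 := by
  have h1 : ∑ x, (fun _ : V => (1:ℝ)) x * lap G f x
      = ∑ x, f x * lap G (fun _ => (1:ℝ)) x := sum_mul_lap G _ f
  have h2 : ∀ x : V, lap G (fun _ => (1:ℝ)) x = 0 := by
    intro x; unfold lap; simp
  simp only [h2, mul_zero, Finset.sum_const_zero, one_mul] at h1
  exact h1

lemma volt_lap_z {a z : V} {v : V → ℝ} (haz : a ≠ z)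
    (hv : IsUnitCurrentVoltage G a z v) : lap G v z = -1 := by
  have h0 := sum_lap_zero G v
  have he : ∀ x : V, lap G v x
      = (if x = a then (1:ℝ) else 0) + (if x = z then lap G v z else 0) := by
    intro x
    by_cases hxa : x = a
    · subst hxa
      rw [if_pos rfl, if_neg haz]
      have := hv.2.1
      unfold lap
      rw [this]; ring
    · by_cases hxz : x = z
      · subst hxz; rw [if_neg hxa, if_pos rfl]; ring
      · have := hv.2.2 x hxa hxz
        unfold lap
        rw [this, if_neg hxa, if_neg hxz]; ring
  rw [Finset.sum_congr rfl (fun x _ => he x), Finset.sum_add_distrib,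
    Finset.sum_ite_eq' Finset.univ a (fun _ => (1:ℝ)),
    Finset.sum_ite_eq' Finset.univ z (fun _ => lap G v z)] at h0
  simp at h0
  linarith

lemma weighted {a z : V} {v : V → ℝ} (haz : a ≠ z)
    (hv : IsUnitCurrentVoltage G a z v) (f : V → ℝ) :
    ∑ x, f x * lap G v x = f a - f z := by
  have hz := volt_lap_z G haz hv
  have he : ∀ x : V, f x * lap G v x
      = (if x = a then f a else 0) - (if x = z then f z else 0) := by
    intro x
    by_cases hxa : x = a
    · subst hxa
      rw [if_pos rfl, if_neg haz]
      have h1 := hv.2.1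
      unfold lap
      rw [h1]; ring
    · by_cases hxz : x = z
      · subst hxz; rw [if_neg hxa, if_pos rfl, hz]; ring
      · have := hv.2.2 x hxa hxz
        unfold lap
        rw [this, if_neg hxa, if_neg hxz]; ring
  rw [Finset.sum_congr rfl (fun x _ => he x), Finset.sum_sub_distrib,
    Finset.sum_ite_eq' Finset.univ a (fun _ => f a),
    Finset.sum_ite_eq' Finset.univ z (fun _ => f z)]
  simp

lemma volt_uniq (hconn : G.Connected) {a z : V} (haz : a ≠ z) (v1 v2 : V → ℝ)
    (h1 : IsUnitCurrentVoltage G a z v1) (h2 : IsUnitCurrentVoltage G a z v2) :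
    v1 = v2 := by
  have key := harmonic_zero G hconn z (fun t => v1 t - v2 t)
    (by simp [h1.1, h2.1])
    (by
      intro x hx
      rw [lap_sub]
      by_cases hxa : x = a
      · subst hxa
        have e1 := h1.2.1; have e2 := h2.2.1
        unfold lap
        rw [e1, e2]; ring
      · have e1 := h1.2.2 x hxa hx; have e2 := h2.2.2 x hxa hx
        unfold lap
        rw [e1, e2]; ring)
  funext x
  have h := key x
  linarith

end Stmt7Aux

open Stmt7Aux

/-- For a simple random walk on a connected graph `G`, the expected hitting time satisfies
`H(a,z) = (1/2) Σ_x d(x) [R(a↔z) + R(z↔x) - R(a↔x)]`, where `R` denotes effective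
resistance with unit resistances on the edges. -/
theorem stmt_7 {V : Type*} [Fintype V] [DecidableEq V]
    (G : SimpleGraph V) [DecidableRel G.Adj] (hconn : G.Connected)
    (hcard : 2 ≤ Fintype.card V)
    (H : V → V → ℝ)
    (hH0 : ∀ x, H x x = 0)
    (hHrec : ∀ x z, x ≠ z →
      H x z = 1 + ((G.degree x : ℝ))⁻¹ * ∑ y ∈ G.neighborFinset x, H y z)
    (R : V → V → ℝ) (hR : IsEffectiveResistance G R) :
    ∀ a z : V,
      H a z = (1/2) * ∑ x, (G.degree x : ℝ) * (R a z + R z x - R a x) := by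
  obtain ⟨hRdiag, hRvolt⟩ := hR
  -- every vertex has positive degree
  have hdeg : ∀ x : V, 0 < G.degree x := by
    intro x
    rw [G.degree_pos_iff_exists_adj]
    obtain ⟨y, hy⟩ := Fintype.exists_ne_of_one_lt_card (by omega) x
    obtain ⟨p⟩ := hconn.preconnected x y
    cases p with
    | nil => exact absurd rfl hy
    | cons h _ => exact ⟨_, h⟩
  -- symmetry of effective resistance
  have hsymm : ∀ p q : V, R p q = R q p := by
    intro p q
    by_cases hpq : p = q
    · subst hpq; rfl
    obtain ⟨v, hv, hvp⟩ := hRvolt p q hpq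
    obtain ⟨w, hw, hwq⟩ := hRvolt q p (Ne.symm hpq)
    have hw' : IsUnitCurrentVoltage G q p (fun y => R p q - v y) := by
      refine ⟨by simp [hvp], ?_, ?_⟩
      · have hlz := volt_lap_z G hpq hv
        have e : ∑ y ∈ G.neighborFinset q, ((R p q - v q) - (R p q - v y))
            = - lap G v q := by
          unfold lap
          rw [← Finset.sum_neg_distrib]
          exact Finset.sum_congr rfl fun y _ => by ring
        rw [e, hlz]; norm_num
      · intro x hxq hxp
        have e : ∑ y ∈ G.neighborFinset x, ((R p q - v x) - (R p q - v y))
            = - lap G v x := by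
          unfold lap
          rw [← Finset.sum_neg_distrib]
          exact Finset.sum_congr rfl fun y _ => by ring
        have h0 := hv.2.2 x hxp hxq
        unfold lap at e
        rw [e, h0]; norm_num
    have heq := volt_uniq G hconn (Ne.symm hpq) w (fun y => R p q - v y) hw hw'
    rw [hwq, heq]
    simp [hv.1]
  intro a z
  by_cases haz : a = z
  · subst haz
    rw [hH0 a, Finset.sum_eq_zero (fun x _ => by rw [hRdiag]; ring)]
    ring
  -- choose a family of voltages towards z
  have hvex : ∀ w : V, ∃ v : V → ℝ, (w = z → v = fun _ => (0:ℝ)) ∧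
      (w ≠ z → IsUnitCurrentVoltage G w z v ∧ R w z = v w) := by
    intro w
    by_cases hw : w = z
    · exact ⟨fun _ => 0, fun _ => rfl, fun h => absurd hw h⟩
    · obtain ⟨v, hv⟩ := hRvolt w z hw
      exact ⟨v, fun h => absurd h hw, fun _ => hv⟩
  choose vv hvz0 hvz1 using hvex
  have vv_z : ∀ w, vv w z = 0 := by
    intro w
    by_cases hw : w = z
    · rw [hvz0 w hw]
    · exact (hvz1 w hw).1.1
  have vvRe : ∀ w, w ≠ z → R w z = vv w w := fun w hw => (hvz1 w hw).2
  have lap_vv_self : ∀ w, w ≠ z → lap G (vv w) w = 1 := fun w hw => (hvz1 w hw).1.2.1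
  have lap_vv_other : ∀ w x, w ≠ z → x ≠ w → x ≠ z → lap G (vv w) x = 0 :=
    fun w x hw hxw hxz => (hvz1 w hw).1.2.2 x hxw hxz
  have lap_vv_zv : ∀ w, w ≠ z → lap G (vv w) z = -1 :=
    fun w hw => volt_lap_z G hw (hvz1 w hw).1
  have lap_vvz : ∀ x, lap G (vv z) x = 0 := by
    intro x; rw [hvz0 z rfl]; unfold lap; simp
  -- reciprocity
  have recip : ∀ w x, w ≠ z → x ≠ z → vv w x = vv x w := by
    intro w x hw hx
    have h1 := weighted G hx (hvz1 x hx).1 (vv w)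
    have h2 := weighted G hw (hvz1 w hw).1 (vv x)
    rw [sum_mul_lap] at h1
    rw [vv_z, sub_zero] at h1 h2
    rw [← h2, h1]
  -- the voltage identity
  have key2 : ∀ b x, b ≠ z → vv b x = (1/2) * (R b z + R z x - R b x) := by
    intro b x hb
    by_cases hxz : x = z
    · subst hxz
      rw [vv_z, hRdiag]; ring
    by_cases hxb : x = b
    · subst hxb
      rw [← vvRe x hb, hRdiag, hsymm z x]; ring
    have hbx : b ≠ x := fun h => hxb h.symm
    obtain ⟨v, hv, hvb⟩ := hRvolt b x hbx
    have hu : IsUnitCurrentVoltage G b x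
        (fun t => vv b t - vv x t - (vv b x - vv x x)) := by
      refine ⟨by ring, ?_, ?_⟩
      · have e := lap_const_sub G (vv b x - vv x x) (vv b) (vv x) b
        unfold lap at e
        rw [e, ]
        have r1 := lap_vv_self b hb
        have r2 := lap_vv_other x b hxz hbx hb
        unfold lap at r1 r2
        rw [r1, r2]; norm_num
      · intro t htb htx
        have e := lap_const_sub G (vv b x - vv x x) (vv b) (vv x) t
        unfold lap at e
        rw [e]
        by_cases htz : t = z
        · subst htz
          have r1 := lap_vv_zv b hb
          have r2 := lap_vv_zv x hxz
          unfold lap at r1 r2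
          rw [r1, r2]; ring
        · have r1 := lap_vv_other b t hb htb htz
          have r2 := lap_vv_other x t hxz htx htz
          unfold lap at r1 r2
          rw [r1, r2]; ring
    have heq := volt_uniq G hconn hbx v _ hv hu
    rw [heq] at hvb
    simp only [] at hvb
    have h1 := vvRe b hb
    have h2 := vvRe x hxz
    have h3 := recip x b hxz hb
    rw [hsymm z x]
    linarith
  -- alternative expression for the right-hand side
  have hFalt : ∀ b : V, (1/2) * ∑ x, (G.degree x : ℝ) * (R b z + R z x - R b x)
      = ∑ w, (G.degree w : ℝ) * vv w b := by
    intro b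
    by_cases hb : b = z
    · subst hb
      rw [Finset.sum_eq_zero (fun x _ => by rw [hRdiag]; ring),
        Finset.sum_eq_zero (fun w _ => by rw [vv_z]; ring)]
      ring
    · rw [Finset.mul_sum]
      refine Finset.sum_congr rfl fun x _ => ?_
      have hx : vv b x = vv x b := by
        by_cases hxz : x = z
        · rw [hxz, vv_z, hvz0 z rfl]
        · exact recip b x hb hxz
      rw [← hx, key2 b x hb]; ring
  -- Laplacian of the hitting-time function
  have lapH : ∀ x, x ≠ z → lap G (fun b => H b z) x = (G.degree x : ℝ) := by
    intro x hx
    have hd : (0:ℝ) < (G.degree x : ℝ) := by exact_mod_cast hdeg x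
    have hrec := hHrec x z hx
    have hmul : (G.degree x : ℝ) * H x z
        = (G.degree x : ℝ) + ∑ y ∈ G.neighborFinset x, H y z := by
      rw [hrec]; field_simp
    unfold lap
    rw [Finset.sum_sub_distrib, Finset.sum_const, nsmul_eq_mul]
    have hc : ((G.neighborFinset x).card : ℝ) = (G.degree x : ℝ) := rfl
    rw [hc]
    linarith
  -- Laplacian of the resistance expression
  have lapF : ∀ x, x ≠ z →
      lap G (fun b => ∑ w, (G.degree w : ℝ) * vv w b) x = (G.degree x : ℝ) := by
    intro x hx
    have swap : lap G (fun b => ∑ w, (G.degree w : ℝ) * vv w b) x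
        = ∑ w, (G.degree w : ℝ) * lap G (vv w) x := by
      unfold lap
      have e : ∀ y : V, (∑ w, (G.degree w : ℝ) * vv w x) - (∑ w, (G.degree w : ℝ) * vv w y)
          = ∑ w, (G.degree w : ℝ) * (vv w x - vv w y) := by
        intro y
        rw [← Finset.sum_sub_distrib]
        exact Finset.sum_congr rfl fun w _ => by ring
      rw [Finset.sum_congr rfl (fun y _ => e y), Finset.sum_comm]
      exact Finset.sum_congr rfl fun w _ => (Finset.mul_sum _ _ _).symm
    rw [swap]
    have e : ∀ w : V, (G.degree w : ℝ) * lap G (vv w) x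
        = if w = x then (G.degree w : ℝ) else 0 := by
      intro w
      by_cases hwx : w = x
      · subst hwx
        rw [lap_vv_self w hx, if_pos rfl]; ring
      · rw [if_neg hwx]
        by_cases hwz : w = z
        · subst hwz; rw [lap_vvz x]; ring
        · rw [lap_vv_other w x hwz (fun h => hwx h.symm) hx]; ring
    rw [Finset.sum_congr rfl (fun w _ => e w),
      Finset.sum_ite_eq' Finset.univ x (fun w => (G.degree w : ℝ))]
    simp
  -- conclude via uniqueness of harmonic extensions
  have hzero := harmonic_zero G hconn z
    (fun b => H b z - ∑ w, (G.degree w : ℝ) * vv w b)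
    (by
      rw [hH0 z, Finset.sum_eq_zero (fun w _ => by rw [vv_z]; ring)]
      ring)
    (by
      intro x hx
      rw [lap_sub, lapH x hx, lapF x hx]; ring)
  have hfin := hzero a
  rw [hFalt a]
  linarith
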